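/- arXiv:1204.2418 — 3 statements merged into one kernel-verified Lean document; each statement's English description precedes it below -/
import Mathlib

section
/- Let V be a finite-dimensional real vector space, let s be an inner product on V (a bijective element of Sym(V) with s(v,v) ≥ 0 for all v), and let u ∈ Sym(V). Then tr(s⁻¹ ∘ u ∘ s⁻¹ ∘ u) ≥ 0, and tr(s⁻¹ ∘ u ∘ s⁻¹ ∘ u) = 0 if and only if u = 0. Consequently g_s(u,v) := tr(s⁻¹ ∘ v ∘ s⁻¹ ∘ u) defines an inner product on the vector space Sym(V). -/
/-- Cauchy-Schwarz-style consequence: a nonneg symmetric form with `s v v = 0`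
kills `v` in the first slot. -/
lemma aux_cs {V : Type*} [AddCommGroup V] [Module ℝ V]
    (s : V →ₗ[ℝ] Module.Dual ℝ V)
    (hs_symm : ∀ v w : V, s v w = s w v)
    (hs_pos : ∀ v : V, 0 ≤ s v v)
    {v : V} (hv : s v v = 0) (w : V) : s v w = 0 := by
  by_contra h
  set a := s v w with ha
  set c := s w w with hc
  have key : ∀ t : ℝ, 0 ≤ 2 * t * a + t ^ 2 * c := by
    intro t
    have h1 := hs_pos (v + t • w)
    simp only [map_add, map_smul, LinearMap.add_apply, LinearMap.smul_apply,
      smul_eq_mul] at h1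
    have hsym : s w v = a := by rw [ha, hs_symm]
    rw [hv, hsym, ← ha, ← hc] at h1
    nlinarith [h1]
  have hc0 : 0 ≤ c := hs_pos w
  have ha2 : 0 < a ^ 2 := by positivity
  rcases eq_or_lt_of_le hc0 with hceq | hclt
  · have h2 := key (-a)
    nlinarith [h2, hceq]
  · have h2 := key (-a / c)
    have hcne : c ≠ 0 := ne_of_gt hclt
    have hval : 2 * (-a / c) * a + (-a / c) ^ 2 * c = -(a ^ 2) / c := by
      field_simp; ring
    rw [hval] at h2
    have h3 : 0 < a ^ 2 / c := div_pos ha2 hclt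
    have h4 : -(a ^ 2) / c = -(a ^ 2 / c) := by ring
    rw [h4] at h2
    linarith

/-- For an inner product `s` on a finite-dimensional real vector space `V` and a
symmetric `u ∈ Sym(V)`, one has `tr(s⁻¹ ∘ u ∘ s⁻¹ ∘ u) ≥ 0`, with equality iff
`u = 0`; hence `g_s(u,v) := tr(s⁻¹ ∘ v ∘ s⁻¹ ∘ u)` is an inner product on `Sym(V)`. -/
theorem trace_sq_nonneg_and_eq_zero_iff
    (V : Type*) [AddCommGroup V] [Module ℝ V] [FiniteDimensional ℝ V]
    (s : V ≃ₗ[ℝ] Module.Dual ℝ V)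
    (hs_symm : ∀ v w : V, s v w = s w v)
    (hs_pos : ∀ v : V, 0 ≤ s v v)
    (u : V →ₗ[ℝ] Module.Dual ℝ V)
    (hu_symm : ∀ x y : V, u x y = u y x) :
    0 ≤ LinearMap.trace ℝ V
        (s.symm.toLinearMap ∘ₗ u ∘ₗ s.symm.toLinearMap ∘ₗ u) ∧
    (LinearMap.trace ℝ V
        (s.symm.toLinearMap ∘ₗ u ∘ₗ s.symm.toLinearMap ∘ₗ u) = 0 ↔ u = 0) := by
  -- Build an inner product space structure on V from s
  letI core : InnerProductSpace.Core ℝ V :=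
    { inner := fun x y => s x y
      conj_inner_symm := fun x y => by simpa using hs_symm y x
      re_inner_nonneg := fun x => by simpa using hs_pos x
      add_left := fun x y z => by simp
      smul_left := fun x y r => by simp
      definite := fun x hx => by
        have h0 : (s : V →ₗ[ℝ] Module.Dual ℝ V) x = 0 := by
          apply LinearMap.ext
          intro w
          exact aux_cs (s : V →ₗ[ℝ] Module.Dual ℝ V) hs_symm hs_pos hx w
        exact s.injective (a₁ := x) (a₂ := 0) (by simpa using h0) }
  letI : NormedAddCommGroup V := core.toNormedAddCommGroup
  letI : InnerProductSpace ℝ V := InnerProductSpace.ofCore core.toCore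
  have hinner : ∀ x y : V, (inner ℝ x y : ℝ) = s x y := fun x y => rfl
  set A : V →ₗ[ℝ] V := s.symm.toLinearMap ∘ₗ u with hA
  have hcomp : (s.symm.toLinearMap ∘ₗ u ∘ₗ s.symm.toLinearMap ∘ₗ u) = A ∘ₗ A := by
    ext x; simp [hA]
  have hAinner : ∀ x y : V, (inner ℝ (A x) y : ℝ) = u x y := by
    intro x y
    rw [hinner]
    simp [hA]
  have hAsym : ∀ x y : V, (inner ℝ (A x) y : ℝ) = inner ℝ x (A y) := by
    intro x y
    rw [hAinner, hu_symm, ← hAinner, real_inner_comm]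
  obtain b := stdOrthonormalBasis ℝ V
  have htr : LinearMap.trace ℝ V (A ∘ₗ A) = ∑ i, (inner ℝ (A (b i)) (A (b i)) : ℝ) := by
    rw [LinearMap.trace_eq_matrix_trace ℝ b.toBasis, Matrix.trace]
    congr 1
    ext i
    rw [Matrix.diag_apply, LinearMap.toMatrix_apply, b.coe_toBasis,
      b.coe_toBasis_repr_apply, b.repr_apply_apply]
    simp only [LinearMap.comp_apply]
    rw [← hAsym]
  rw [hcomp, htr]
  refine ⟨Finset.sum_nonneg fun i _ => real_inner_self_nonneg, ?_, ?_⟩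
  · intro h
    have hall := (Finset.sum_eq_zero_iff_of_nonneg
      (fun i _ => real_inner_self_nonneg)).mp h
    have hA0 : A = 0 := by
      apply b.toBasis.ext
      intro i
      have := inner_self_eq_zero.mp (hall i (Finset.mem_univ i))
      simpa [b.coe_toBasis] using this
    apply LinearMap.ext
    intro x
    have h1 : s.symm (u x) = 0 := by
      have : A x = 0 := by rw [hA0]; rfl
      simpa [hA] using this
    have := s.symm.injective (a₁ := u x) (a₂ := 0) (by simpa using h1)
    simpa using this
  · intro h
    simp [hA, h]
end

section
/- Gradient of the volume function. Let V be a finite-dimensional real vector space with inner product s (a bijective element of Sym(V) with s(v,v) ≥ 0), let v₁,…,v_m ∈ V be linearly independent with span W, write vol_ξ²(s) = det((s(v_i,v_j))_{i,j}), let P : V → V be the s-orthogonal projection onto W, and set s_ξ := s ∘ P ∈ Sym(V). Then for every u ∈ Sym(V) the function t ↦ det(((s + t·u)(v_i,v_j))_{i,j}) is differentiable at t = 0 with derivative g_s(vol_ξ²(s) · s_ξ, u), where g_s(a,b) := tr(s⁻¹ ∘ b ∘ s⁻¹ ∘ a). That is, the gradient of vol_ξ² with respect to the Riemannian metric g at s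 is vol_ξ²(s) · s_ξ. -/
open Matrix Polynomial

/-- Gradient of the volume function: with `s_ξ := s ∘ P` for the `s`-orthogonal
projection `P` onto `W = span(v₁,…,v_m)`, the function
`t ↦ det(((s + t·u)(vᵢ,vⱼ))ᵢⱼ)` has, at `t = 0`, the derivative
`g_s(vol_ξ²(s) · s_ξ, u) = tr(s⁻¹ ∘ u ∘ s⁻¹ ∘ (vol_ξ²(s) · s_ξ))`,
i.e. the gradient of `vol_ξ²` at `s` with respect to `g` is `vol_ξ²(s) · s_ξ`. -/
theorem gradient_of_volume_function
    (V : Type*) [AddCommGroup V] [Module ℝ V] [FiniteDimensional ℝ V]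
    (s : V ≃ₗ[ℝ] Module.Dual ℝ V)
    (hs_symm : ∀ x y : V, s x y = s y x)
    (hs_pos : ∀ x : V, 0 ≤ s x x)
    (u : V →ₗ[ℝ] Module.Dual ℝ V)
    (hu_symm : ∀ x y : V, u x y = u y x)
    (m : ℕ) (v : Fin m → V) (hv : LinearIndependent ℝ v)
    (P : V →ₗ[ℝ] V)
    (hP_idem : P ∘ₗ P = P)
    (hP_range : LinearMap.range P = Submodule.span ℝ (Set.range v))
    (hP_sa : ∀ x y : V, s (P x) y = s x (P y)) :
    HasDerivAt
      (fun t : ℝ => Matrix.det (Matrix.of fun i j => s (v i) (v j) + t * u (v i) (v j)))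
      (LinearMap.trace ℝ V
        (s.symm.toLinearMap ∘ₗ u ∘ₗ s.symm.toLinearMap ∘ₗ
          (Matrix.det (Matrix.of fun i j => s (v i) (v j)) • (s.toLinearMap ∘ₗ P))))
      0 := by
  classical
  -- definiteness of s
  have hdef : ∀ x : V, s x x = 0 → x = 0 := by
    intro x hx
    have hsx : ∀ y : V, s x y = 0 := by
      intro y
      set a := s y y with ha_def
      set b := s x y with hb_def
      have ha : 0 ≤ a := hs_pos y
      have ha1 : (0:ℝ) < a + 1 := by linarith
      set t : ℝ := -(b/(a+1)) with ht_def
      have hpos := hs_pos (x + t • y)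
      simp only [map_add, _root_.map_smul, LinearMap.add_apply, LinearMap.smul_apply,
        smul_eq_mul] at hpos
      rw [hx, ← hb_def, hs_symm y x, ← hb_def, ← ha_def] at hpos
      have hb0 : b = 0 := by
        rw [ht_def] at hpos
        have hD : (0:ℝ) < (a + 1) * ((a + 1) * (a + 1)) := by positivity
        field_simp at hpos
        nlinarith [sq_nonneg b, ha1, mul_pos ha1 ha1]
      exact hb0
    have h0 : s x = 0 := by ext y; simpa using hsx y
    exact (LinearEquiv.map_eq_zero_iff s).mp h0
  set G : Matrix (Fin m) (Fin m) ℝ := Matrix.of fun i j => s (v i) (v j) with hG_def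
  set U : Matrix (Fin m) (Fin m) ℝ := Matrix.of fun i j => u (v i) (v j) with hU_def
  -- the Gram matrix is invertible
  have hdet : G.det ≠ 0 := by
    intro h0
    obtain ⟨c, hc0, hc⟩ := (Matrix.exists_mulVec_eq_zero_iff).mpr h0
    set x : V := ∑ i, c i • v i with hx_def
    have hxx : s x x = c ⬝ᵥ (G *ᵥ c) := by
      simp only [hx_def, map_sum, LinearMap.sum_apply, dotProduct,
        Matrix.mulVec, hG_def, Matrix.of_apply, Finset.mul_sum]
      rw [Finset.sum_comm]
      apply Finset.sum_congr rfl; intro i _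
      apply Finset.sum_congr rfl; intro j _
      simp only [_root_.map_smul, LinearMap.smul_apply, smul_eq_mul]
      ring
    rw [hc, dotProduct_zero] at hxx
    have hx0 : x = 0 := hdef x hxx
    have : ∀ i, c i = 0 := Fintype.linearIndependent_iff.mp hv c (by rw [← hx_def, hx0])
    exact hc0 (funext this)
  -- the projection fixes the v i
  have hPv : ∀ i, P (v i) = v i := by
    intro i
    have hmem : v i ∈ LinearMap.range P := by
      rw [hP_range]; exact Submodule.subset_span ⟨i, rfl⟩
    obtain ⟨y, hy⟩ := hmem
    have := congrArg (fun f => f y) hP_idem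
    simp only [LinearMap.comp_apply] at this
    rw [← hy]
    exact this
  -- the matrix of the relevant endomorphism of W
  set W : Submodule ℝ V := Submodule.span ℝ (Set.range v) with hW_def
  set A : V →ₗ[ℝ] V := s.symm.toLinearMap ∘ₗ u with hA_def
  set B : V →ₗ[ℝ] V := P ∘ₗ (A ∘ₗ P) with hB_def
  have hBmem : ∀ x : V, B x ∈ W := by
    intro x
    rw [← hP_range]
    exact ⟨A (P x), rfl⟩
  set Q : V →ₗ[ℝ] W := LinearMap.codRestrict W B hBmem with hQ_def
  set b : Module.Basis (Fin m) ℝ W := Module.Basis.span hv with hb_def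
  set E : W →ₗ[ℝ] W := Q ∘ₗ W.subtype with hE_def
  set M : Matrix (Fin m) (Fin m) ℝ := LinearMap.toMatrix b b E with hM_def
  -- key matrix identity: G * M = U
  have hGM : G * M = U := by
    ext k j
    have h1 : ((E (b j) : W) : V) = ∑ i, M i j • v i := by
      conv_lhs => rw [← b.sum_repr (E (b j))]
      rw [Submodule.coe_sum]
      apply Finset.sum_congr rfl; intro i _
      rw [SetLike.val_smul]
      congr 1
      · rw [hM_def, LinearMap.toMatrix_apply]
      · exact congrArg Subtype.val (Module.Basis.span_apply hv i)
    have h2 : ((E (b j) : W) : V) = P (A (P (v j))) := by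
      have hbj : ((b j : W) : V) = v j := congrArg Subtype.val (Module.Basis.span_apply hv j)
      rw [hE_def]
      simp only [LinearMap.comp_apply, Submodule.subtype_apply]
      rw [hQ_def, LinearMap.codRestrict_apply, hbj, hB_def]
      simp [LinearMap.comp_apply]
    -- evaluate s (v k) on both sides
    have lhs_eq : s (v k) ((E (b j) : W) : V) = ∑ i, G k i * M i j := by
      rw [h1, map_sum]
      apply Finset.sum_congr rfl; intro i _
      rw [_root_.map_smul, smul_eq_mul, hG_def]
      simp only [Matrix.of_apply]
      ring
    have rhs_eq : s (v k) ((E (b j) : W) : V) = U k j := by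
      rw [h2, ← hP_sa, hPv k, hA_def]
      simp only [LinearMap.comp_apply, LinearEquiv.coe_coe]
      rw [hPv j, hs_symm, LinearEquiv.apply_symm_apply, hu_symm]
      rfl
    rw [Matrix.mul_apply, ← lhs_eq, rhs_eq]
  have hM_eq : M = G⁻¹ * U := by
    rw [← hGM, ← Matrix.mul_assoc, Matrix.nonsing_inv_mul G (Ne.isUnit hdet), Matrix.one_mul]
  -- the trace identity
  have htr : LinearMap.trace ℝ V
        (s.symm.toLinearMap ∘ₗ u ∘ₗ s.symm.toLinearMap ∘ₗ
          (G.det • (s.toLinearMap ∘ₗ P)))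
      = G.det * (G⁻¹ * U).trace := by
    have hcomp : s.symm.toLinearMap ∘ₗ u ∘ₗ s.symm.toLinearMap ∘ₗ
          (G.det • (s.toLinearMap ∘ₗ P)) = G.det • (A ∘ₗ P) := by
      ext x
      simp [hA_def, LinearMap.comp_apply, _root_.map_smul]
    rw [hcomp, _root_.map_smul, smul_eq_mul]
    congr 1
    -- trace (A ∘ₗ P) = (G⁻¹ * U).trace
    have hPP : ∀ x : V, P (P x) = P x := fun x => congrArg (fun f => f x) hP_idem
    have e1 : A ∘ₗ P = (A ∘ₗ P) ∘ₗ P := by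
      ext x; simp [LinearMap.comp_apply, hPP x]
    rw [e1, LinearMap.trace_comp_comm']
    have e2 : P ∘ₗ (A ∘ₗ P) = W.subtype ∘ₗ Q := by
      rw [← hB_def]
      exact (LinearMap.subtype_comp_codRestrict B W hBmem).symm
    rw [e2, LinearMap.trace_comp_comm', ← hE_def,
      LinearMap.trace_eq_matrix_trace ℝ b, ← hM_def, hM_eq]
  -- the derivative computation
  set c : ℝ := (G⁻¹ * U).trace with hc_def
  set q : ℝ[X] := (Matrix.det (1 + (X : ℝ[X]) • (G⁻¹ * U).map C)).divX.divX with hq_def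
  have hfun : ∀ t : ℝ, Matrix.det (Matrix.of fun i j => s (v i) (v j) + t * u (v i) (v j))
      = G.det * (1 + c * t + q.eval t * t ^ 2) := by
    intro t
    have hmat : (Matrix.of fun i j => s (v i) (v j) + t * u (v i) (v j))
        = G * (1 + t • (G⁻¹ * U)) := by
      rw [Matrix.mul_add, Matrix.mul_one, Matrix.mul_smul, ← Matrix.mul_assoc,
        Matrix.mul_nonsing_inv G (Ne.isUnit hdet), Matrix.one_mul]
      ext i j
      simp [hG_def, hU_def, Matrix.add_apply, Matrix.smul_apply, smul_eq_mul]
    rw [hmat, Matrix.det_mul, Matrix.det_one_add_smul, hq_def, hc_def]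
  have hderiv : HasDerivAt (fun t : ℝ => G.det * (1 + c * t + q.eval t * t ^ 2))
      (G.det * c) 0 := by
    have h1 : HasDerivAt (fun t : ℝ => c * t) c 0 := by
      simpa using (hasDerivAt_id (0:ℝ)).const_mul c
    have h2 : HasDerivAt (fun t : ℝ => q.eval t * t ^ 2)
        (q.derivative.eval 0 * 0 ^ 2 + q.eval 0 * (2 * 0 ^ 1)) 0 :=
      (q.hasDerivAt 0).mul (hasDerivAt_pow 2 0)
    have h2' : HasDerivAt (fun t : ℝ => q.eval t * t ^ 2) 0 0 := by simpa using h2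
    have h3 : HasDerivAt (fun t : ℝ => 1 + c * t + q.eval t * t ^ 2) c 0 := by
      have h3' := ((hasDerivAt_const (0:ℝ) (1:ℝ)).add h1).add h2'
      simp only [zero_add, add_zero] at h3'
      exact h3'
    exact h3.const_mul G.det
  have hfun' : (fun t : ℝ => Matrix.det (Matrix.of fun i j => s (v i) (v j) + t * u (v i) (v j)))
      = fun t : ℝ => G.det * (1 + c * t + q.eval t * t ^ 2) := funext hfun
  rw [hfun', htr]
  exact hderiv
end

section
/- Let T be a finite abelian group and k a natural number, and consider the abelian group A = ℤᵏ × T. Every automorphism φ of A maps the torsion subgroup {0} × T to itself and induces automorphisms φ₁ of ℤᵏ ≅ A/T and φ₂ of T; the resulting map Aut(A) → Aut(ℤᵏ) × Aut(T), φ ↦ (φ₁, φ₂), is a surjective group homomorphism whose kernel is isomorphic, as a group, to the additive group Hom(ℤᵏ, T). In particular there is a short exact sequence of groups 1 → Hom(ℤᵏ, T) → Aut(ℤᵏ × T) → Aut(ℤᵏ) × Aut(T) → 1. -/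
namespace AutZkT

variable {k : ℕ} {T : Type*} [AddCommGroup T] [Finite T]

/-- Every automorphism kills the first coordinate on the torsion part. -/
lemma fst_zero (φ : AddAut ((Fin k → ℤ) × T)) (t : T) : (φ (0, t)).1 = 0 := by
  obtain ⟨n, hn, ht⟩ := (isOfFinAddOrder_of_finite t).exists_nsmul_eq_zero
  have h : n • φ (0, t) = 0 := by
    rw [← map_nsmul]
    have h0 : n • ((0 : Fin k → ℤ), t) = (0, 0) := by
      simp [Prod.smul_def, ht]
    rw [h0]
    simpa using map_zero φ.toAddEquiv
  have h1 : n • (φ (0, t)).1 = 0 := by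
    have := congrArg Prod.fst h
    simpa using this
  funext i
  have h2 : (n : ℤ) * (φ (0, t)).1 i = 0 := by
    have := congrFun h1 i
    simpa [nsmul_eq_mul] using this
  have hn' : (n : ℤ) ≠ 0 := Int.natCast_ne_zero.mpr hn.ne'
  exact (mul_eq_zero.mp h2).resolve_left hn'

lemma eta_snd (φ : AddAut ((Fin k → ℤ) × T)) (t : T) :
    φ (0, t) = (0, (φ (0, t)).2) :=
  Prod.ext (fst_zero φ t) rfl

lemma key (φ : AddAut ((Fin k → ℤ) × T)) (p : (Fin k → ℤ) × T) :
    φ p = φ (p.1, 0) + (0, (φ (0, p.2)).2) := by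
  conv_lhs => rw [show p = (p.1, 0) + (0, p.2) by simp, map_add, eta_snd]

def A1 (φ : AddAut ((Fin k → ℤ) × T)) : (Fin k → ℤ) ≃+ (Fin k → ℤ) where
  toFun x := (φ (x, 0)).1
  invFun x := ((-φ) (x, 0)).1
  left_inv x := by
    have h := key (-φ) (φ (x, 0))
    have h2 : (-φ) (φ (x, 0)) = (x, 0) := φ.left_inv _
    have h3 := congrArg Prod.fst (h2 ▸ h.symm)
    simpa using h3
  right_inv x := by
    have h := key φ ((-φ) (x, 0))
    have h2 : φ ((-φ) (x, 0)) = (x, 0) := φ.right_inv _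
    have h3 := congrArg Prod.fst (h2 ▸ h.symm)
    simpa using h3
  map_add' x y := by
    show (φ (x + y, 0)).1 = (φ (x, 0)).1 + (φ (y, 0)).1
    rw [show ((x + y : Fin k → ℤ), (0 : T)) = (x, 0) + (y, 0) by simp, map_add]
    rfl

def A2 (φ : AddAut ((Fin k → ℤ) × T)) : T ≃+ T where
  toFun t := (φ (0, t)).2
  invFun t := ((-φ) (0, t)).2
  left_inv t := by
    have h2 : (-φ) (0, (φ (0, t)).2) = (0, t) := by
      rw [← eta_snd]; exact φ.left_inv _
    exact congrArg Prod.snd h2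
  right_inv t := by
    have h2 : φ (0, ((-φ) (0, t)).2) = (0, t) := by
      rw [← eta_snd]; exact φ.right_inv _
    exact congrArg Prod.snd h2
  map_add' s t := by
    show (φ (0, s + t)).2 = (φ (0, s)).2 + (φ (0, t)).2
    rw [show ((0 : Fin k → ℤ), s + t) = (0, s) + (0, t) by simp, map_add]
    rfl

def Phi : Multiplicative (AddAut ((Fin k → ℤ) × T)) →*
    Multiplicative (AddAut (Fin k → ℤ)) × Multiplicative (AddAut T) where
  toFun φ := (Multiplicative.ofAdd (A1 φ.toAdd), Multiplicative.ofAdd (A2 φ.toAdd))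
  map_one' := by
    refine Prod.ext (AddEquiv.ext fun x => rfl) (AddEquiv.ext fun t => rfl)
  map_mul' φ ψ := by
    refine Prod.ext (AddEquiv.ext fun x => ?_) (AddEquiv.ext fun t => ?_)
    · show ((φ.toAdd + ψ.toAdd) ((x, 0))).1 = (φ.toAdd ((ψ.toAdd (x, 0)).1, 0)).1
      rw [AddAut.add_apply, key φ.toAdd (ψ.toAdd (x, 0))]
      simp
    · show ((φ.toAdd + ψ.toAdd) ((0, t))).2 = (φ.toAdd (0, (ψ.toAdd (0, t)).2)).2
      rw [AddAut.add_apply]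
      conv_lhs => rw [eta_snd ψ.toAdd t]

lemma snd_of_fst (φ : AddAut ((Fin k → ℤ) × T)) (t : T) :
    φ (0, t) = (0, (Phi (Multiplicative.ofAdd φ)).2.toAdd t) := eta_snd φ t

lemma Phi_surjective : Function.Surjective (Phi (k := k) (T := T)) := by
  rintro ⟨a, b⟩
  exact ⟨Multiplicative.ofAdd (AddEquiv.prodCongr a.toAdd b.toAdd),
    Prod.ext (AddEquiv.ext fun x => show (a.toAdd x, b.toAdd 0).1 = a.toAdd x from rfl)
      (AddEquiv.ext fun t => show (a.toAdd 0, b.toAdd t).2 = b.toAdd t from rfl)⟩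

def shear (f : (Fin k → ℤ) →+ T) : AddAut ((Fin k → ℤ) × T) where
  toFun p := (p.1, p.2 + f p.1)
  invFun p := (p.1, p.2 - f p.1)
  left_inv p := by simp
  right_inv p := by simp
  map_add' p q := by
    simp [Prod.add_def]
    abel

lemma shear_mem_ker (f : (Fin k → ℤ) →+ T) : Multiplicative.ofAdd (shear f) ∈ Phi.ker := by
  rw [MonoidHom.mem_ker]
  refine Prod.ext (AddEquiv.ext fun x => ?_) (AddEquiv.ext fun t => ?_)
  · show ((shear f) (x, 0)).1 = x
    rfl
  · show ((shear f) (0, t)).2 = t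
    simp [shear]

def sndHom (φ : AddAut ((Fin k → ℤ) × T)) : (Fin k → ℤ) →+ T where
  toFun x := (φ (x, 0)).2
  map_zero' := by exact congrArg Prod.snd (map_zero φ)
  map_add' x y := by
    show (φ (x + y, 0)).2 = (φ (x, 0)).2 + (φ (y, 0)).2
    rw [show ((x + y : Fin k → ℤ), (0 : T)) = (x, 0) + (y, 0) by simp, map_add]
    rfl

noncomputable def kerIso :
    Multiplicative ((Fin k → ℤ) →+ T) ≃* (Phi (k := k) (T := T)).ker where
  toFun f := ⟨Multiplicative.ofAdd (shear f.toAdd), shear_mem_ker _⟩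
  invFun φ := Multiplicative.ofAdd (sndHom (φ : Multiplicative (AddAut ((Fin k → ℤ) × T))).toAdd)
  left_inv f := by
    apply Multiplicative.toAdd.injective
    refine AddMonoidHom.ext fun x => ?_
    show ((shear f.toAdd) (x, 0)).2 = f.toAdd x
    simp [shear]
  right_inv := by
    rintro ⟨φ, hφ⟩
    obtain ⟨φ, rfl⟩ := Multiplicative.ofAdd.surjective φ
    rw [MonoidHom.mem_ker] at hφ
    have h1 : ∀ x : Fin k → ℤ, (φ (x, 0)).1 = x := fun x =>
      DFunLike.congr_fun (congrArg Multiplicative.toAdd (congrArg Prod.fst hφ)) x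
    have h2 : ∀ t : T, (φ (0, t)).2 = t := fun t =>
      DFunLike.congr_fun (congrArg Multiplicative.toAdd (congrArg Prod.snd hφ)) t
    refine Subtype.ext (AddEquiv.ext fun p => ?_)
    show ((p.1 : Fin k → ℤ), p.2 + (φ (p.1, 0)).2) = φ p
    rw [key φ p, h2, ← Prod.mk.eta (p := φ (p.1, 0)), h1]
    show _ = (p.1 + 0, (φ (p.1, 0)).2 + p.2)
    rw [Prod.mk.injEq]
    exact ⟨by simp, by abel⟩
  map_mul' f g := by
    refine Subtype.ext (AddEquiv.ext fun p => ?_)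
    show ((p.1 : Fin k → ℤ), p.2 + ((f * g).toAdd) p.1)
      = (shear f.toAdd) ((shear g.toAdd) p)
    show (p.1, p.2 + (f.toAdd p.1 + g.toAdd p.1))
      = (p.1, p.2 + g.toAdd p.1 + f.toAdd p.1)
    rw [Prod.mk.injEq]
    exact ⟨rfl, by abel⟩

end AutZkT

/-- For `A = ℤᵏ × T` with `T` finite abelian: every automorphism of `A` preserves the
torsion subgroup `{0} × T`, the induced map `Aut(A) → Aut(ℤᵏ) × Aut(T)` is a surjective
group homomorphism, and its kernel is isomorphic as a group to `Hom(ℤᵏ, T)`. Hence there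
is a short exact sequence `1 → Hom(ℤᵏ,T) → Aut(ℤᵏ × T) → Aut(ℤᵏ) × Aut(T) → 1`. -/
theorem aut_of_Zk_times_finite_short_exact
    (k : ℕ) (T : Type*) [AddCommGroup T] [Finite T] :
    (∀ φ : AddAut ((Fin k → ℤ) × T), ∀ t : T, (φ (0, t)).1 = 0) ∧
    ∃ Φ : Multiplicative (AddAut ((Fin k → ℤ) × T)) →*
        Multiplicative (AddAut (Fin k → ℤ)) × Multiplicative (AddAut T),
      (∀ (φ : AddAut ((Fin k → ℤ) × T)) (x : Fin k → ℤ),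
          (Multiplicative.toAdd (Φ (Multiplicative.ofAdd φ)).1) x = (φ (x, 0)).1) ∧
      (∀ (φ : AddAut ((Fin k → ℤ) × T)) (t : T),
          φ (0, t) = (0, (Multiplicative.toAdd (Φ (Multiplicative.ofAdd φ)).2) t)) ∧
      Function.Surjective Φ ∧
      Nonempty (Multiplicative ((Fin k → ℤ) →+ T) ≃* Φ.ker) := by
  refine ⟨AutZkT.fst_zero, AutZkT.Phi, fun φ x => rfl,
    fun φ t => AutZkT.snd_of_fst φ t, AutZkT.Phi_surjective, ⟨AutZkT.kerIso⟩⟩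
end
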